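/- For all real b satisfying b > log₂(3π) - (1/2)·log₂(3π√3 - 4) - 1/2, the inequality 20·log₁₀(√(3/2)·2^b) > -10·log₁₀( π√3·2^(-2b-1)·(1 - π√3·2^(-2b-1)) ) holds. Moreover log₂(3π) - (1/2)·log₂(3π√3 - 4) - 1/2 < 1, so the inequality holds for every positive integer b. -/

import Mathlib

open Real

set_option maxHeartbeats 1000000 in
private lemma adc_aux_part2 :
    Real.logb 2 (3 * π) - (1/2) * Real.logb 2 (3 * π * Real.sqrt 3 - 4) - 1/2 < 1 := by
  have hπ := Real.pi_pos
  have ht2 : Real.sqrt 3 ^ 2 = 3 := Real.sq_sqrt (by norm_num)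
  have ht1 : (1.732:ℝ) < Real.sqrt 3 := by
    nlinarith [Real.sq_sqrt (show (0:ℝ) ≤ 3 by norm_num), Real.sqrt_nonneg (3:ℝ)]
  have htpos : (0:ℝ) < Real.sqrt 3 := by linarith
  have hπ31 : π < 3.15 := by nlinarith [Real.pi_lt_d2]
  have hπ314 : (3.14:ℝ) < π := by nlinarith [Real.pi_gt_d2]
  have hK : (0:ℝ) < 3 * π * Real.sqrt 3 - 4 := by nlinarith
  have hlog2 : (0:ℝ) < Real.log 2 := Real.log_pos one_lt_two
  have hnum : (3*π)^2 < 8 * (3 * π * Real.sqrt 3 - 4) := by nlinarith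
  have hl : Real.log ((3*π)^2) < Real.log (8 * (3*π*Real.sqrt 3 - 4)) :=
    Real.log_lt_log (by positivity) hnum
  rw [Real.log_pow, Real.log_mul (by norm_num) (ne_of_gt hK)] at hl
  have h8 : Real.log 8 = 3 * Real.log 2 := by
    rw [show (8:ℝ) = 2^(3:ℕ) by norm_num, Real.log_pow]; push_cast; ring
  have key : Real.log (3*π) - (1/2)*Real.log (3*π*Real.sqrt 3 - 4) < (3/2)*Real.log 2 := by
    push_cast at hl; linarith
  rw [Real.logb, Real.logb]
  rw [show Real.log (3*π)/Real.log 2 - 1/2*(Real.log (3*π*Real.sqrt 3-4)/Real.log 2)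
      = (Real.log (3*π) - 1/2*Real.log (3*π*Real.sqrt 3-4))/Real.log 2 by ring]
  have := (div_lt_iff₀ hlog2).mpr (show Real.log (3*π) - 1/2*Real.log (3*π*Real.sqrt 3-4)
      < (3/2) * Real.log 2 by linarith)
  linarith

set_option maxHeartbeats 1000000 in
private lemma adc_aux_part1 :
    ∀ b : ℝ, b > Real.logb 2 (3 * π) - (1/2) * Real.logb 2 (3 * π * Real.sqrt 3 - 4) - 1/2 →
      20 * Real.logb 10 (Real.sqrt (3/2) * (2:ℝ) ^ b) >
        -(10 * Real.logb 10 (π * Real.sqrt 3 * (2:ℝ) ^ (-2 * b - 1) *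
          (1 - π * Real.sqrt 3 * (2:ℝ) ^ (-2 * b - 1)))) := by
  have hπ := Real.pi_pos
  have ht2 : Real.sqrt 3 ^ 2 = 3 := Real.sq_sqrt (by norm_num)
  have ht1 : (1.732:ℝ) < Real.sqrt 3 := by
    nlinarith [Real.sq_sqrt (show (0:ℝ) ≤ 3 by norm_num), Real.sqrt_nonneg (3:ℝ)]
  have htpos : (0:ℝ) < Real.sqrt 3 := by linarith
  have hπ31 : π < 3.15 := by nlinarith [Real.pi_lt_d2]
  have hπ314 : (3.14:ℝ) < π := by nlinarith [Real.pi_gt_d2]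
  have hK : (0:ℝ) < 3 * π * Real.sqrt 3 - 4 := by nlinarith
  have hlog2 : (0:ℝ) < Real.log 2 := Real.log_pos one_lt_two
  have h3π : (0:ℝ) < 3 * π := by linarith
  intro b hb
  rw [Real.logb, Real.logb] at hb
  have hbmul := mul_lt_mul_of_pos_right hb hlog2
  have hrw : (Real.log (3*π)/Real.log 2 - 1/2*(Real.log (3*π*Real.sqrt 3-4)/Real.log 2) - 1/2)
        * Real.log 2
      = Real.log (3*π) - 1/2*Real.log (3*π*Real.sqrt 3-4) - 1/2*Real.log 2 := by
    field_simp
  rw [hrw] at hbmul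
  have hb3 : 2*Real.log (3*π) - Real.log (3*π*Real.sqrt 3 - 4) < (2*b+1)*Real.log 2 := by
    linarith
  have hexp : Real.exp (2*Real.log (3*π) - Real.log (3*π*Real.sqrt 3-4))
      = (3*π)^2/(3*π*Real.sqrt 3-4) := by
    rw [show 2*Real.log (3*π) = Real.log ((3*π)^2) by rw [Real.log_pow]; push_cast; ring,
      Real.exp_sub, Real.exp_log hK, Real.exp_log (by positivity)]
  have hpow : (2:ℝ)^(2*b+1) = Real.exp ((2*b+1)*Real.log 2) := by
    rw [Real.rpow_def_of_pos (by norm_num : (0:ℝ) < 2)]; ring_nf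
  have hbig : (3*π)^2/(3*π*Real.sqrt 3-4) < (2:ℝ)^(2*b+1) := by
    rw [hpow, ← hexp]; exact Real.exp_lt_exp.mpr hb3
  set y := (2:ℝ)^(2*b) with hy_def
  have hy : 0 < y := Real.rpow_pos_of_pos (by norm_num) _
  have h2y : (2:ℝ)^(2*b+1) = 2*y := by
    rw [hy_def, Real.rpow_add (by norm_num : (0:ℝ) < 2), Real.rpow_one]; ring
  set qv := π * Real.sqrt 3 * (2:ℝ) ^ (-2 * b - 1) with hqv_def
  have hqv : 0 < qv := by
    rw [hqv_def]; positivity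
  have hq2 : qv * (2*y) = π * Real.sqrt 3 := by
    rw [hqv_def, ← h2y, mul_assoc, ← Real.rpow_add (by norm_num : (0:ℝ) < 2),
      show -2*b-1 + (2*b+1) = 0 by ring, Real.rpow_zero, mul_one]
  have h9 : (3*π)^2 < 2*y*(3*π*Real.sqrt 3 - 4) := by
    rw [← h2y]; exact (div_lt_iff₀ hK).mp hbig
  have e1 : qv*(2*y)*(3*π*Real.sqrt 3-4) = π*Real.sqrt 3*(3*π*Real.sqrt 3-4) := by
    rw [hq2]
  have hsq : 3*(π*Real.sqrt 3)*qv < 3*π*Real.sqrt 3 - 4 := by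
    have m1 := mul_lt_mul_of_pos_left h9 hqv
    nlinarith [m1, e1, ht2, hπ, htpos, hqv, mul_pos hπ htpos,
      mul_pos (mul_pos hπ htpos) hqv]
  have hq1 : qv < 1 := by nlinarith [mul_pos hπ htpos]
  have hA2 : (Real.sqrt (3/2) * (2:ℝ)^b)^2 = 3/2 * y := by
    rw [mul_pow, Real.sq_sqrt (by norm_num : (0:ℝ) ≤ 3/2), hy_def,
      ← Real.rpow_natCast ((2:ℝ)^b) 2,
      ← Real.rpow_mul (by norm_num : (0:ℝ) ≤ 2),
      show b*((2:ℕ):ℝ) = 2*b by push_cast; ring]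
  have hyq : y*qv = π*Real.sqrt 3/2 := by linarith [hq2]
  have hyq2 : y*qv*qv = (π*Real.sqrt 3/2)*qv := by rw [hyq]
  have hfin : 1 < (Real.sqrt (3/2) * (2:ℝ)^b)^2 * (qv * (1 - qv)) := by
    rw [hA2]
    nlinarith [hsq, hyq, hyq2]
  have hApos : 0 < Real.sqrt (3/2) * (2:ℝ)^b := by positivity
  have hqq : 0 < qv * (1 - qv) := mul_pos hqv (by linarith)
  have hsplit : Real.logb 10 ((Real.sqrt (3/2) * (2:ℝ)^b)^2 * (qv*(1-qv)))
      = 2 * Real.logb 10 (Real.sqrt (3/2) * (2:ℝ)^b) + Real.logb 10 (qv*(1-qv)) := by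
    rw [Real.logb_mul (by positivity) (ne_of_gt hqq), Real.logb_pow]
    push_cast; ring
  have hpos : 0 < Real.logb 10 ((Real.sqrt (3/2) * (2:ℝ)^b)^2 * (qv*(1-qv))) :=
    Real.logb_pos (by norm_num) hfin
  rw [hsplit] at hpos
  rw [hqv_def] at hpos
  linarith

theorem adc_dynamic_range_resolvability :
    (∀ b : ℝ, b > Real.logb 2 (3 * π) - (1/2) * Real.logb 2 (3 * π * Real.sqrt 3 - 4) - 1/2 →
      20 * Real.logb 10 (Real.sqrt (3/2) * (2:ℝ) ^ b) >
        -(10 * Real.logb 10 (π * Real.sqrt 3 * (2:ℝ) ^ (-2 * b - 1) *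
          (1 - π * Real.sqrt 3 * (2:ℝ) ^ (-2 * b - 1))))) ∧
    Real.logb 2 (3 * π) - (1/2) * Real.logb 2 (3 * π * Real.sqrt 3 - 4) - 1/2 < 1 ∧
    (∀ n : ℕ, 0 < n →
      20 * Real.logb 10 (Real.sqrt (3/2) * (2:ℝ) ^ (n:ℝ)) >
        -(10 * Real.logb 10 (π * Real.sqrt 3 * (2:ℝ) ^ (-2 * (n:ℝ) - 1) *
          (1 - π * Real.sqrt 3 * (2:ℝ) ^ (-2 * (n:ℝ) - 1))))) := by
  refine ⟨adc_aux_part1, adc_aux_part2, ?_⟩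
  intro n hn
  exact adc_aux_part1 (n:ℝ) (lt_of_lt_of_le adc_aux_part2 (by exact_mod_cast hn))
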